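/- Let 1 ≤ r ≤ n be integers. The number of rook words a of length n with run(a) = r equals r · Σ_{j=0}^{r-1} (−1)^j · binom(r−1, j) · (n−1−j)^{n−1}. -/

import Mathlib

open Finset

noncomputable section
open scoped Classical

/-- `a : Fin n → Fin n` encodes a word `(a_1,…,a_n) ∈ {1,…,n}^n` via `a_i = (a i) + 1`
(i.e. the `Fin n` value is the 1-based letter minus one). -/
def IsParkingFunction {n : ℕ} (a : Fin n → Fin n) : Prop :=
  ∀ i : Fin n, (i : ℕ) + 1 ≤ (Finset.univ.filter (fun j => a j ≤ i)).card

/-- `X = {x_1 < … < x_ℓ}` is centered for `a` iff `a_{x_i} ≤ i` for all `i`, i.e. the 1-based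
value at `x` is at most the rank of `x` in `X`. -/
def Centered {n : ℕ} (a : Fin n → Fin n) (X : Finset (Fin n)) : Prop :=
  ∀ x ∈ X, (a x : ℕ) + 1 ≤ (X.filter (fun y => y ≤ x)).card

/-- `z(a)`: the maximum cardinality of a centered set for `a`. -/
def zOf {n : ℕ} (a : Fin n → Fin n) : ℕ :=
  sSup {k : ℕ | ∃ X : Finset (Fin n), Centered a X ∧ X.card = k}

/-- `run(a)`: the largest `i` such that all 1-based values `1,…,i` occur in `a` (0 if none). -/
def runOf {n : ℕ} (a : Fin n → Fin n) : ℕ :=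
  ((Finset.range n).filter (fun i => ∀ j ≤ i, ∃ x : Fin n, (a x : ℕ) = j)).card

/-- `Run(a)`: the set of positions `j` that are the last occurrence of some 1-based value
`≤ run(a)`. -/
def RunSet {n : ℕ} (a : Fin n → Fin n) : Finset (Fin n) :=
  Finset.univ.filter (fun j => (a j : ℕ) < runOf a ∧ ∀ j' : Fin n, j < j' → a j' ≠ a j)

/-- A rook word: the first letter is at most `run(a)`. -/
def IsRookWord {n : ℕ} (a : Fin n → Fin n) : Prop :=
  ∃ h : 0 < n, (a ⟨0, h⟩ : ℕ) + 1 ≤ runOf a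

/-- `LegEq T k` : depth-first search from `0`, always preferring the largest unvisited neighbour,
visits exactly `k` non-root vertices before the first backtracking. -/
def LegEq {n : ℕ} (T : SimpleGraph (Fin (n + 1))) (k : ℕ) : Prop :=
  ∃ v : Fin (k + 1) → Fin (n + 1),
    v 0 = 0 ∧
    (∀ i : Fin k,
      T.Adj (v i.castSucc) (v i.succ) ∧
      (∀ j : Fin (k + 1), j ≤ i.castSucc → v i.succ ≠ v j) ∧
      (∀ w : Fin (n + 1), T.Adj (v i.castSucc) w →
        (∀ j : Fin (k + 1), j ≤ i.castSucc → w ≠ v j) → w ≤ v i.succ)) ∧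
    (∀ w : Fin (n + 1), T.Adj (v (Fin.last k)) w → ∃ j : Fin (k + 1), w = v j)

/-- `Nbr [ℓ_1,…,ℓ_m]` is the number of tuples `(x_0,…,x_m)` with `x_0 = 0` and
`x_{i-1} < x_i ≤ ℓ_1 + ⋯ + ℓ_i` for all `i`. -/
def Nbr (L : List ℤ) : ℕ :=
  Nat.card {x : Fin (L.length + 1) → ℤ //
    x 0 = 0 ∧ ∀ i : Fin L.length,
      x i.castSucc < x i.succ ∧ x i.succ ≤ (L.take ((i : ℕ) + 1)).sum}

/-- The cyclic sum `s(ℓ)` of the paper (indices of `ℓ` read modulo `k`). -/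
def cycS (k r : ℕ) (t : ℤ) (ℓ : ℕ → ℕ) : ℕ :=
  ∑ i ∈ Finset.range k,
    Nbr (((∑ j ∈ Finset.range r, (ℓ ((i + j + 1) % k) : ℤ)) + t) ::
      List.ofFn (fun p : Fin (k - r - 1) => (ℓ ((i + r + 1 + (p : ℕ)) % k) : ℤ)))

/-- `B` is the coimage of `a`: the ordered partition of positions into fibers of `a`,
ordered by increasing value. -/
def IsCoimage {n k : ℕ} (a : Fin n → Fin n) (B : Fin k → Finset (Fin n)) : Prop :=
  (∀ j, (B j).Nonempty) ∧
  (∀ x : Fin n, ∃ j, x ∈ B j) ∧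
  (∀ j j' : Fin k, ∀ x ∈ B j, ∀ y ∈ B j', (a x = a y ↔ j = j')) ∧
  (∀ j j' : Fin k, ∀ x ∈ B j, ∀ y ∈ B j', j < j' → a x < a y)

/-- `a` is of type `𝔄` iff its coimage is a cyclic rotation of `𝔄`. -/
def IsOfType {n k : ℕ} (a : Fin n → Fin n) (A : Fin k → Finset (Fin n)) : Prop :=
  ∃ s : ℕ, s < k ∧ IsCoimage a (fun j => A ⟨((j : ℕ) + s) % k, Nat.mod_lt _ j.pos⟩)

lemma incl_excl_count {β α : Type*} [Fintype β] [DecidableEq β] [Fintype α] [DecidableEq α]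
    (T A : Finset α) (hTA : T ⊆ A) :
    ((univ.filter fun f : β → α => T ⊆ univ.image f ∧ ∀ x, f x ∈ A).card : ℤ) =
      ∑ j ∈ Finset.range (T.card + 1),
        (-1 : ℤ) ^ j * (T.card.choose j : ℤ) * ((A.card : ℤ) - (j : ℤ)) ^ (Fintype.card β) := by
  classical
  have hfilter : (univ.filter fun f : β → α => T ⊆ univ.image f ∧ ∀ x, f x ∈ A)
      = (Fintype.piFinset fun _ : β => A).filter (fun f => T ⊆ univ.image f) := by
    ext f
    simp only [mem_filter, mem_univ, true_and, Fintype.mem_piFinset]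
    tauto
  rw [hfilter, ← Finset.sum_boole]
  have step2 : ∀ f : β → α,
      (if T ⊆ univ.image f then (1:ℤ) else 0)
        = ∑ S ∈ T.powerset, if S ⊆ T \ univ.image f then (-1:ℤ)^S.card else 0 := by
    intro f
    have hU : (T \ univ.image f).powerset = T.powerset.filter (· ⊆ T \ univ.image f) := by
      ext S
      simp only [mem_powerset, mem_filter]
      constructor
      · intro h; exact ⟨h.trans (sdiff_subset), h⟩
      · tauto
    rw [← Finset.sum_filter, ← hU, Finset.sum_powerset_neg_one_pow_card]
    simp only [sdiff_eq_empty_iff_subset]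
  simp_rw [step2]
  rw [Finset.sum_comm]
  have step3 : ∀ S ∈ T.powerset,
      (∑ f ∈ Fintype.piFinset (fun _ : β => A),
          if S ⊆ T \ univ.image f then (-1:ℤ)^S.card else 0)
        = (-1:ℤ)^S.card * ((A.card : ℤ) - (S.card : ℤ)) ^ Fintype.card β := by
    intro S hS
    rw [mem_powerset] at hS
    have hSA : S ⊆ A := hS.trans hTA
    rw [← Finset.sum_filter]
    have hfil : (Fintype.piFinset fun _ : β => A).filter (fun f => S ⊆ T \ univ.image f)
        = Fintype.piFinset (fun _ : β => A \ S) := by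
      ext f
      simp only [mem_filter, Fintype.mem_piFinset, mem_sdiff]
      constructor
      · rintro ⟨hA, hsub⟩ x
        exact ⟨hA x, fun hxS =>
          (mem_sdiff.1 (hsub hxS)).2 (mem_image_of_mem f (mem_univ x))⟩
      · intro h
        refine ⟨fun x => (h x).1, fun s hsS => mem_sdiff.2 ⟨hS hsS, ?_⟩⟩
        rw [mem_image]
        rintro ⟨x, -, rfl⟩
        exact (h x).2 hsS
    rw [hfil, Finset.sum_const, Fintype.card_piFinset]
    simp only [Finset.prod_const, Finset.card_univ, nsmul_eq_mul]
    rw [card_sdiff_of_subset hSA]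
    have : ((A.card - S.card : ℕ) : ℤ) = (A.card : ℤ) - (S.card : ℤ) := by
      have := Finset.card_le_card hSA; push_cast [Nat.cast_sub this]; ring
    rw [Nat.cast_pow, this]
    ring
  rw [Finset.sum_congr rfl step3, Finset.sum_powerset]
  refine Finset.sum_congr rfl fun j hj => ?_
  rw [Finset.sum_congr rfl (fun S hS => by rw [(Finset.mem_powersetCard.1 hS).2]),
    Finset.sum_const, Finset.card_powersetCard, nsmul_eq_mul]
  ring

lemma runOf_eq_iff {n r : ℕ} (hr : 1 ≤ r) (hrn : r ≤ n) (a : Fin n → Fin n) :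
    runOf a = r ↔ ((∀ j < r, ∃ x : Fin n, (a x : ℕ) = j) ∧ ∀ x : Fin n, (a x : ℕ) ≠ r) := by
  classical
  set s := (Finset.range n).filter (fun i => ∀ j ≤ i, ∃ x : Fin n, (a x : ℕ) = j) with hs
  have hrun : runOf a = s.card := rfl
  have hdc : ∀ i ∈ s, ∀ i', i' ≤ i → i' ∈ s := by
    intro i hi i' hi'
    rw [hs, mem_filter, mem_range] at hi ⊢
    exact ⟨lt_of_le_of_lt hi' hi.1, fun j hj => hi.2 j (hj.trans hi')⟩
  constructor
  · intro h
    have hcard : s.card = r := hrun ▸ h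
    have hmem : ∀ i, i ∈ s ↔ i < r := by
      intro i
      constructor
      · intro hi
        by_contra hlt
        push_neg at hlt
        have hsub : Finset.range (i+1) ⊆ s := fun k hk =>
          hdc i hi k (Nat.lt_succ_iff.1 (mem_range.1 hk))
        have := Finset.card_le_card hsub
        rw [Finset.card_range, hcard] at this
        omega
      · intro hi
        by_contra hnot
        have hsub : s ⊆ Finset.range i := by
          intro k hk
          rw [mem_range]
          by_contra hk2
          push_neg at hk2
          exact hnot (hdc k hk i hk2)
        have := Finset.card_le_card hsub
        rw [Finset.card_range, hcard] at this
        omega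
    have hr1 : (r-1) ∈ s := (hmem _).2 (by omega)
    rw [hs, mem_filter] at hr1
    have hcov : ∀ j < r, ∃ x : Fin n, (a x : ℕ) = j := fun j hj => hr1.2 j (by omega)
    refine ⟨hcov, fun x hx => ?_⟩
    have hrn2 : r < n := hx ▸ (a x).isLt
    have hrs : r ∈ s := by
      rw [hs, mem_filter, mem_range]
      refine ⟨hrn2, fun j hj => ?_⟩
      rcases Nat.lt_or_ge j r with h1 | h1
      · exact hcov j h1
      · exact ⟨x, by omega⟩
    exact absurd ((hmem r).1 hrs) (lt_irrefl r)
  · rintro ⟨hcov, hno⟩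
    have hseq : s = Finset.range r := by
      ext i
      rw [hs, mem_filter, mem_range, mem_range]
      constructor
      · rintro ⟨hin, hPi⟩
        by_contra hge
        push_neg at hge
        obtain ⟨x, hx⟩ := hPi r hge
        exact hno x hx
      · intro hir
        exact ⟨lt_of_lt_of_le hir hrn, fun j hj => hcov j (lt_of_le_of_lt hj hir)⟩
    rw [hrun, hseq, Finset.card_range]

set_option maxHeartbeats 2000000 in
theorem rw_run_count_alternating (n r : ℕ) (hr : 1 ≤ r) (hrn : r ≤ n) :
    (Nat.card {a : Fin n → Fin n // IsRookWord a ∧ runOf a = r} : ℤ) =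
    (r : ℤ) * ∑ j ∈ Finset.range r,
      (-1 : ℤ) ^ j * ((r - 1).choose j : ℤ) * ((n : ℤ) - 1 - (j : ℤ)) ^ (n - 1) := by
  obtain ⟨m, rfl⟩ : ∃ m, n = m + 1 := ⟨n - 1, by omega⟩
  have hchar : ∀ a : Fin (m+1) → Fin (m+1),
      (IsRookWord a ∧ runOf a = r) ↔
      ((a 0 : ℕ) < r ∧ (∀ j < r, ∃ x, (a x : ℕ) = j) ∧ ∀ x, (a x : ℕ) ≠ r) := by
    intro a
    constructor
    · rintro ⟨⟨hn, hrw⟩, hrun⟩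
      obtain ⟨hcov, hno⟩ := (runOf_eq_iff hr hrn a).1 hrun
      refine ⟨?_, hcov, hno⟩
      rw [hrun] at hrw
      have h0 : (⟨0, hn⟩ : Fin (m+1)) = 0 := rfl
      rw [h0] at hrw
      omega
    · rintro ⟨h0, hcov, hno⟩
      have hrun := (runOf_eq_iff hr hrn a).2 ⟨hcov, hno⟩
      refine ⟨⟨Nat.succ_pos m, ?_⟩, hrun⟩
      rw [hrun]
      have h00 : (⟨0, Nat.succ_pos m⟩ : Fin (m+1)) = 0 := rfl
      rw [h00]
      omega
  set Q : Fin (m+1) → (Fin m → Fin (m+1)) → Prop := fun c b =>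
    (c : ℕ) < r ∧ (∀ j < r, (c : ℕ) = j ∨ ∃ y, (b y : ℕ) = j) ∧ ∀ y, (b y : ℕ) ≠ r with hQ
  have hconsiff : ∀ (c : Fin (m+1)) (b : Fin m → Fin (m+1)),
      (((Fin.cons c b : Fin (m+1) → Fin (m+1)) 0 : ℕ) < r ∧
        (∀ j < r, ∃ x, ((Fin.cons c b : Fin (m+1) → Fin (m+1)) x : ℕ) = j) ∧
        ∀ x, ((Fin.cons c b : Fin (m+1) → Fin (m+1)) x : ℕ) ≠ r) ↔ Q c b := by
    intro c b
    simp only [hQ, Fin.forall_fin_succ, Fin.exists_fin_succ, Fin.cons_zero, Fin.cons_succ]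
    constructor
    · rintro ⟨h1, h2, h3⟩; exact ⟨h1, h2, h3.2⟩
    · rintro ⟨h1, h2, h3⟩; exact ⟨h1, h2, by omega, h3⟩
  have hcount : (Nat.card {a : Fin (m+1) → Fin (m+1) // IsRookWord a ∧ runOf a = r} : ℤ)
      = ∑ c : Fin (m+1), ((univ.filter fun b : Fin m → Fin (m+1) => Q c b).card : ℤ) := by
    have e4 : {pr : Fin (m+1) × (Fin m → Fin (m+1)) // Q pr.1 pr.2}
        ≃ {a : Fin (m+1) → Fin (m+1) //
            (a 0 : ℕ) < r ∧ (∀ j < r, ∃ x, (a x : ℕ) = j) ∧ ∀ x, (a x : ℕ) ≠ r} :=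
      Equiv.subtypeEquiv (Fin.consEquiv fun _ => Fin (m+1))
        (fun pr => (hconsiff pr.1 pr.2).symm)
    have e5 : {a : Fin (m+1) → Fin (m+1) // IsRookWord a ∧ runOf a = r}
        ≃ Σ c : Fin (m+1), {b : Fin m → Fin (m+1) // Q c b} :=
      (Equiv.subtypeEquivRight hchar).trans
        (e4.symm.trans (Equiv.subtypeProdEquivSigmaSubtype Q))
    rw [Nat.card_congr e5, Nat.card_eq_fintype_card, Fintype.card_sigma, Nat.cast_sum]
    refine Finset.sum_congr rfl fun c _ => ?_
    congr 1
    exact Fintype.card_subtype _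
  have hfr : (univ.filter fun j : Fin (m+1) => (j : ℕ) < r) =
      (Finset.range r).attachFin (fun x hx => lt_of_lt_of_le (Finset.mem_range.1 hx) hrn) := by
    ext j; simp [Finset.mem_attachFin]
  have hfrcard : (univ.filter fun j : Fin (m+1) => (j : ℕ) < r).card = r := by
    rw [hfr, Finset.card_attachFin, Finset.card_range]
  have hper : ∀ c : Fin (m+1),
      ((univ.filter fun b : Fin m → Fin (m+1) => Q c b).card : ℤ)
        = if (c : ℕ) < r then
            ∑ j ∈ Finset.range r, (-1:ℤ)^j * ((r-1).choose j : ℤ) * ((m:ℤ) - (j:ℤ))^m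
          else 0 := by
    intro c
    by_cases hc : (c : ℕ) < r
    · rw [if_pos hc]
      set T : Finset (Fin (m+1)) := (univ.filter fun j : Fin (m+1) => (j : ℕ) < r).erase c
        with hT
      have hcmem : c ∈ univ.filter fun j : Fin (m+1) => (j : ℕ) < r := by simp [hc]
      have hTcard : T.card = r - 1 := by
        rw [hT, Finset.card_erase_of_mem hcmem, hfrcard]
      have hmemT : ∀ t : Fin (m+1), t ∈ T ↔ (t ≠ c ∧ (t : ℕ) < r) := by
        intro t
        rw [hT, Finset.mem_erase, Finset.mem_filter]
        simp
      have hcoviff : ∀ b : Fin m → Fin (m+1),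
          (∀ j < r, (c : ℕ) = j ∨ ∃ y, (b y : ℕ) = j) ↔ T ⊆ univ.image b := by
        intro b
        constructor
        · intro hcov t ht
          obtain ⟨htc, htr⟩ := (hmemT t).1 ht
          rcases hcov (t : ℕ) htr with h | ⟨y, hy⟩
          · exact absurd (Fin.ext h).symm htc
          · exact Finset.mem_image.2 ⟨y, Finset.mem_univ y, Fin.ext hy⟩
        · intro hsub j hj
          by_cases hcj : (c : ℕ) = j
          · exact Or.inl hcj
          · have hjn : j < m + 1 := lt_of_lt_of_le hj hrn
            have hjT : (⟨j, hjn⟩ : Fin (m+1)) ∈ T :=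
              (hmemT _).2 ⟨Fin.ne_of_val_ne (by simpa using fun h => hcj h.symm), hj⟩
            obtain ⟨y, -, hy⟩ := Finset.mem_image.1 (hsub hjT)
            exact Or.inr ⟨y, by rw [hy]⟩
      rcases Nat.lt_or_ge r (m+1) with hrm | hrm
      · -- case r < m + 1
        set rf : Fin (m+1) := ⟨r, hrm⟩ with hrf
        set A : Finset (Fin (m+1)) := univ.erase rf with hA
        have hTA : T ⊆ A := by
          intro t ht
          rw [hA, Finset.mem_erase]
          refine ⟨Fin.ne_of_val_ne ?_, Finset.mem_univ t⟩
          have := ((hmemT t).1 ht).2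
          simp only [hrf]
          omega
        have hAcard : A.card = m := by
          rw [hA, Finset.card_erase_of_mem (Finset.mem_univ rf), Finset.card_univ,
            Fintype.card_fin, Nat.add_sub_cancel]
        have hfeq : (univ.filter fun b : Fin m → Fin (m+1) => Q c b)
            = univ.filter (fun b : Fin m → Fin (m+1) =>
                T ⊆ univ.image b ∧ ∀ y, b y ∈ A) := by
          refine Finset.filter_congr fun b _ => ?_
          simp only [hQ]
          constructor
          · rintro ⟨-, hcov, hno⟩
            refine ⟨(hcoviff b).1 hcov, fun y => ?_⟩
            rw [hA, Finset.mem_erase]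
            exact ⟨Fin.ne_of_val_ne (hno y), Finset.mem_univ _⟩
          · rintro ⟨hsub, hmem⟩
            refine ⟨hc, (hcoviff b).2 hsub, fun y h => ?_⟩
            exact (Finset.mem_erase.1 (hA ▸ hmem y)).1 (Fin.ext h)
        rw [hfeq]
        have h := incl_excl_count (β := Fin m) T A hTA
        rw [hTcard] at h
        rw [hAcard] at h
        simp only [Fintype.card_fin] at h
        have h1 : r - 1 + 1 = r := Nat.succ_pred_eq_of_pos hr
        rw [h1] at h
        convert h using 3
        · ext f; simp
      · -- case r = m + 1
        have hreq : r = m + 1 := le_antisymm hrn hrm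
        have hTm : T.card = m := by rw [hTcard, hreq, Nat.add_sub_cancel]
        have hfeq : (univ.filter fun b : Fin m → Fin (m+1) => Q c b)
            = univ.filter (fun b : Fin m → Fin (m+1) =>
                T ⊆ univ.image b ∧ ∀ y, b y ∈ T) := by
          refine Finset.filter_congr fun b _ => ?_
          simp only [hQ]
          constructor
          · rintro ⟨-, hcov, -⟩
            have hsub := (hcoviff b).1 hcov
            have him : T = univ.image b := by
              refine Finset.eq_of_subset_of_card_le hsub ?_
              rw [hTm]
              calc (univ.image b).card ≤ (univ : Finset (Fin m)).card :=
                    Finset.card_image_le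
                _ = m := by rw [Finset.card_univ, Fintype.card_fin]
            refine ⟨hsub, fun y => ?_⟩
            rw [him]
            exact Finset.mem_image_of_mem b (Finset.mem_univ y)
          · rintro ⟨hsub, -⟩
            refine ⟨hc, (hcoviff b).2 hsub, fun y h => ?_⟩
            have := (b y).isLt
            omega
        rw [hfeq]
        have h := incl_excl_count (β := Fin m) T T (Finset.Subset.refl T)
        rw [hTm] at h
        simp only [Fintype.card_fin] at h
        rw [hreq, Nat.add_sub_cancel]
        convert h using 3
        · ext f; simp
    · rw [if_neg hc]
      have hempty : (univ.filter fun b : Fin m → Fin (m+1) => Q c b) = ∅ := by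
        rw [Finset.filter_eq_empty_iff]
        intro b _
        simp only [hQ]
        exact fun h => hc h.1
      rw [hempty, Finset.card_empty, Nat.cast_zero]
  rw [hcount]
  simp_rw [hper]
  rw [← Finset.sum_filter, Finset.sum_const, hfrcard, nsmul_eq_mul]
  congr 1
  refine Finset.sum_congr rfl fun j _ => ?_
  rw [Nat.add_sub_cancel]
  push_cast
  ring

end
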